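/- For Hermitian positive semi-definite matrices X and Y in C^{n×n}, the matrix X + Y − 4(X:Y) is positive semi-definite. -/

import Mathlib

open scoped Matrix Matrix.Norms.L2Operator ComplexOrder MatrixOrder

/-- `MPInv A B` means `B` is the Moore-Penrose inverse of `A`. -/
def MPInv {n : ℕ} (A B : Matrix (Fin n) (Fin n) ℂ) : Prop :=
  A * B * A = A ∧ B * A * B = B ∧ (A * B).IsHermitian ∧ (B * A).IsHermitian

lemma mp_unique {n : ℕ} {A B C : Matrix (Fin n) (Fin n) ℂ} (hB : MPInv A B) (hC : MPInv A C) :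
    B = C := by
  obtain ⟨b1, b2, b3, b4⟩ := hB
  obtain ⟨c1, c2, c3, c4⟩ := hC
  have hAB : A * B = A * C := by
    calc A * B = (A * C) * (A * B) := by rw [← Matrix.mul_assoc, c1]
    _ = (A * C)ᴴ * (A * B)ᴴ := by rw [c3.eq, b3.eq]
    _ = Cᴴ * (A * B * A)ᴴ := by
        simp only [Matrix.conjTranspose_mul]
        noncomm_ring
    _ = Cᴴ * Aᴴ := by rw [b1]
    _ = (A * C)ᴴ := by rw [Matrix.conjTranspose_mul]
    _ = A * C := c3.eq
  have hBA : B * A = C * A := by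
    calc B * A = (B * A) * (C * A) := by rw [Matrix.mul_assoc, ← Matrix.mul_assoc A C A, c1]
    _ = (B * A)ᴴ * (C * A)ᴴ := by rw [c4.eq, b4.eq]
    _ = (A * B * A)ᴴ * Cᴴ := by
        simp only [Matrix.conjTranspose_mul]
        noncomm_ring
    _ = Aᴴ * Cᴴ := by rw [b1]
    _ = (C * A)ᴴ := by rw [Matrix.conjTranspose_mul]
    _ = C * A := c4.eq
  calc B = B * A * B := b2.symm
  _ = B * (A * C) := by rw [Matrix.mul_assoc, hAB]
  _ = (C * A) * C := by rw [← Matrix.mul_assoc, hBA]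
  _ = C := c2

lemma psd_add_eq_zero {n : ℕ} {A B : Matrix (Fin n) (Fin n) ℂ}
    (hA : A.PosSemidef) (hB : B.PosSemidef) (h : A + B = 0) : A = 0 := by
  have hAv : ∀ x, A *ᵥ x = 0 := by
    intro x
    rw [← hA.dotProduct_mulVec_zero_iff]
    have h0 : star x ⬝ᵥ A *ᵥ x + star x ⬝ᵥ B *ᵥ x = 0 := by
      rw [← dotProduct_add, ← Matrix.add_mulVec, h, Matrix.zero_mulVec,
        dotProduct_zero]
    exact ((add_eq_zero_iff_of_nonneg (hA.dotProduct_mulVec_nonneg x) (hB.dotProduct_mulVec_nonneg x)).mp h0).1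
  ext i j
  have := congr_fun (hAv (Pi.single j 1)) i
  simpa [Matrix.mulVec_single] using this

/-- X + Y - 4(X:Y) is positive semidefinite. -/
theorem sub_four_parallel_sum_posSemidef {n : ℕ} (X Y Sd : Matrix (Fin n) (Fin n) ℂ)
    (hX : X.PosSemidef) (hY : Y.PosSemidef) (hSd : MPInv (X + Y) Sd) :
    (X + Y - (4 : ℂ) • (X * Sd * Y)).PosSemidef := by
  set S := X + Y with hSdef
  have hS : S.PosSemidef := hX.add hY
  obtain ⟨h1, h2, h3, h4⟩ := hSd
  have hSh : Sᴴ = S := hS.isHermitian.eq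
  -- Sd is Hermitian
  have hSdH : Sdᴴ = Sd := by
    refine (mp_unique (B := Sdᴴ) (C := Sd) ?_ ⟨h1, h2, h3, h4⟩)
    refine ⟨?_, ?_, ?_, ?_⟩
    · calc S * Sdᴴ * S = (Sᴴ * Sd * Sᴴ)ᴴ := by simp [Matrix.conjTranspose_mul, Matrix.mul_assoc]
      _ = S := by rw [hSh]; rw [congrArg Matrix.conjTranspose h1, hSh]
    · calc Sdᴴ * S * Sdᴴ = (Sd * Sᴴ * Sd)ᴴ := by simp [Matrix.conjTranspose_mul, Matrix.mul_assoc]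
      _ = Sdᴴ := by rw [hSh, h2]
    · have : S * Sdᴴ = (Sd * S)ᴴ := by rw [Matrix.conjTranspose_mul, hSh]
      rw [this]; exact h4.conjTranspose
    · have : Sdᴴ * S = (S * Sd)ᴴ := by rw [Matrix.conjTranspose_mul, hSh]
      rw [this]; exact h3.conjTranspose
  -- Sd is PosSemidef
  have hSdP : Sd.PosSemidef := by
    have := hS.conjTranspose_mul_mul_same Sd
    rwa [hSdH, h2] at this
  -- the projection Q = 1 - S * Sd kills X and Y
  have key : ∀ Z : Matrix (Fin n) (Fin n) ℂ, Z.PosSemidef → (S - Z).PosSemidef →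
      Z + (S - Z) = S → S * Sd * Z = Z := by
    intro Z hZ hZ' hZS
    set Q : Matrix (Fin n) (Fin n) ℂ := 1 - S * Sd with hQ
    have hQh : Qᴴ = Q := by
      rw [hQ, Matrix.conjTranspose_sub, Matrix.conjTranspose_one, h3.eq]
    have hQS : Q * S = 0 := by
      rw [hQ, Matrix.sub_mul, Matrix.one_mul, h1, sub_self]
    have hsum : Q * Z * Qᴴ + Q * (S - Z) * Qᴴ = 0 := by
      rw [← Matrix.add_mul, ← Matrix.mul_add, hZS, hQS, Matrix.zero_mul]
    have hQZ : Q * Z * Qᴴ = 0 :=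
      psd_add_eq_zero (hZ.mul_mul_conjTranspose_same Q)
        (hZ'.mul_mul_conjTranspose_same Q) hsum
    -- deduce Q * Z = 0
    have hsq : Q * CFC.sqrt Z * (Q * CFC.sqrt Z)ᴴ = 0 := by
      rw [Matrix.conjTranspose_mul, (Matrix.nonneg_iff_posSemidef.mp (CFC.sqrt_nonneg Z)).isHermitian.eq]
      have : Q * CFC.sqrt Z * (CFC.sqrt Z * Qᴴ) = Q * (CFC.sqrt Z * CFC.sqrt Z) * Qᴴ := by noncomm_ring
      rw [this, CFC.sqrt_mul_sqrt_self Z hZ.nonneg, hQZ]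
    have hQsqrt : Q * CFC.sqrt Z = 0 := Matrix.self_mul_conjTranspose_eq_zero.mp hsq
    have : Q * Z = 0 := by
      conv_lhs => rw [← CFC.sqrt_mul_sqrt_self Z hZ.nonneg]
      rw [← Matrix.mul_assoc, hQsqrt, Matrix.zero_mul]
    rw [hQ, Matrix.sub_mul, Matrix.one_mul, sub_eq_zero] at this
    exact this.symm
  have hSX : S * Sd * X = X := key X hX (by simpa [hSdef] using hY) (by abel)
  have hSY : S * Sd * Y = Y := key Y hY (by simpa [hSdef] using hX) (by abel)
  have hXS : X * Sd * S = X := by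
    have := congrArg Matrix.conjTranspose hSX
    simpa [Matrix.conjTranspose_mul, hSdH, hSh, hX.isHermitian.eq, Matrix.mul_assoc] using this
  have hYS : Y * Sd * S = Y := by
    have := congrArg Matrix.conjTranspose hSY
    simpa [Matrix.conjTranspose_mul, hSdH, hSh, hY.isHermitian.eq, Matrix.mul_assoc] using this
  -- key algebraic identities
  have e1 : X * Sd * Y = Y - Y * Sd * Y := by
    have : X * Sd * Y = S * Sd * Y - Y * Sd * Y := by
      rw [hSdef]; noncomm_ring
    rw [this, hSY]
  have e2 : Y * Sd * X = Y - Y * Sd * Y := by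
    have : Y * Sd * X = Y * Sd * S - Y * Sd * Y := by
      rw [hSdef]; noncomm_ring
    rw [this, hYS]
  have e3 : X * Sd * X = X - (Y - Y * Sd * Y) := by
    have : X * Sd * X = X * Sd * S - X * Sd * Y := by
      rw [hSdef]; noncomm_ring
    rw [this, hXS, e1]
  have main : X + Y - (4 : ℂ) • (X * Sd * Y) = (X - Y)ᴴ * Sd * (X - Y) := by
    rw [Matrix.conjTranspose_sub, hX.isHermitian.eq, hY.isHermitian.eq]
    have expand : (X - Y) * Sd * (X - Y)
        = X * Sd * X - Y * Sd * X - (X * Sd * Y - Y * Sd * Y) := by noncomm_ring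
    rw [expand, e1, e2, e3]
    module
  rw [main]
  exact hSdP.conjTranspose_mul_mul_same (X - Y)
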